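/- Let G and G' be achievement positional games on disjoint vertex sets. If o(G)∈{L, L^-} and o(G')=N, then Left has a winning strategy on G∪G' as first player, i.e. o(G∪G')∈{L, L^-, N}. -/

import Mathlib

namespace APG

/-- The two players: Left and Right. -/
inductive Player : Type
  | L : Player
  | R : Player
deriving DecidableEq, Repr

/-- The opponent of a player. -/
def Player.other : Player → Player
  | .L => .R
  | .R => .L

/-- An achievement positional game: a finite vertex set together with the set of
blue edges (Left's winning sets) and the set of red edges (Right's winning sets). -/
structure Game : Type where
  V : Finset ℕ
  EL : Finset (Finset ℕ)
  ER : Finset (Finset ℕ)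

/-- The edges are nonempty subsets of the vertex set. -/
def WellFormed (G : Game) : Prop :=
  (∀ e ∈ G.EL, e ⊆ G.V ∧ e.Nonempty) ∧ (∀ e ∈ G.ER, e ⊆ G.V ∧ e.Nonempty)

/-- The winning sets of a given player. -/
def Game.edges (G : Game) : Player → Finset (Finset ℕ)
  | .L => G.EL
  | .R => G.ER

/-- The player who makes the `i`-th move (0-indexed) when `s` moves first. -/
def mover (s : Player) (i : ℕ) : Player := if i % 2 = 0 then s else s.other

/-- The set of vertices picked by player `p` along the history `h`
(the chronological list of the moves played so far), when `s` moved first. -/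
def picked (s p : Player) (h : List ℕ) : Finset ℕ :=
  ((Finset.range h.length).filter fun i => mover s i = p).image fun i => h.getD i 0

/-- The set `S` of picked vertices fills some edge of `E`. -/
def fills (E : Finset (Finset ℕ)) (S : Finset ℕ) : Prop := ∃ e ∈ E, e ⊆ S

/-- The game is over: some player has picked all the vertices of one of their edges. -/
def ended (G : Game) (s : Player) (h : List ℕ) : Prop :=
  fills G.EL (picked s .L h) ∨ fills G.ER (picked s .R h)

/-- `h` is a legal history: no vertex is picked twice, every picked vertex belongs to
the board, and no move is made after the game has ended. -/
def ValidHist (G : Game) (s : Player) (h : List ℕ) : Prop :=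
  h.Nodup ∧ (∀ x ∈ h, x ∈ G.V) ∧ ∀ k, k < h.length → ¬ ended G s (h.take k)

/-- A strategy: a map assigning to each position (history) a vertex to pick. -/
abbrev Strategy := List ℕ → ℕ

/-- Along `h`, every move of player `p` agrees with the strategy `σ`. -/
def Follows (s p : Player) (σ : Strategy) (h : List ℕ) : Prop :=
  ∀ k, k < h.length → mover s k = p → h.getD k 0 = σ (h.take k)

/-- A finished play: either the game has ended or all vertices have been picked. -/
def Complete (G : Game) (s : Player) (h : List ℕ) : Prop :=
  ended G s h ∨ h.length = G.V.card

/-- The strategy `σ` of player `p` always suggests a legal move (an unpicked vertex)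
whenever the game is not over and it is `p`'s turn. -/
def Legal (G : Game) (s p : Player) (σ : Strategy) : Prop :=
  ∀ h, ValidHist G s h → Follows s p σ h → ¬ ended G s h → h.length < G.V.card →
    mover s h.length = p → σ h ∈ G.V ∧ σ h ∉ h

/-- Player `p` has a winning strategy on `G` when `s` moves first: following it,
every finished play ends with `p` having filled one of their edges (and, the game
having ended right there, the opponent has not filled an edge first). -/
def WinsAs (G : Game) (s p : Player) : Prop :=
  ∃ σ : Strategy, Legal G s p σ ∧
    ∀ h, ValidHist G s h → Follows s p σ h → Complete G s h →
      fills (G.edges p) (picked s p h)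

/-- Player `p` has a non-losing strategy on `G` when `s` moves first: following it,
the opponent never fills one of their edges. -/
def NonLosingAs (G : Game) (s p : Player) : Prop :=
  ∃ σ : Strategy, Legal G s p σ ∧
    ∀ h, ValidHist G s h → Follows s p σ h → Complete G s h →
      ¬ fills (G.edges p.other) (picked s p.other h)

/-- The possible results of the game, for a fixed starting player. -/
inductive Result : Type
  | Lwin : Result
  | draw : Result
  | Rwin : Result
deriving DecidableEq, Repr

/-- The result of `G` with optimal play, when `s` moves first, is `r`:
a win for a player means that player has a winning strategy, a draw means
both players have non-losing strategies. -/
def resultIs (G : Game) (s : Player) : Result → Prop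
  | .Lwin => WinsAs G s .L
  | .Rwin => WinsAs G s .R
  | .draw => NonLosingAs G s .L ∧ NonLosingAs G s .R

/-- An outcome: the pair of results with optimal play
(when Left starts, when Right starts). -/
abbrev Outcome := Result × Result

/-- `G` has outcome `o`. -/
def hasOutcome (G : Game) (o : Outcome) : Prop :=
  resultIs G .L o.1 ∧ resultIs G .R o.2

/-- Numerical value of a result, from Left's point of view:
Right wins < draw < Left wins. -/
def Result.val : Result → ℕ
  | .Rwin => 0
  | .draw => 1
  | .Lwin => 2

/-- The partial order `≤_L` on outcomes, comparing both components simultaneously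
from Left's point of view. -/
def outLE (o o' : Outcome) : Prop := o.1.val ≤ o'.1.val ∧ o.2.val ≤ o'.2.val

def oL : Outcome := (.Lwin, .Lwin)
def oLminus : Outcome := (.Lwin, .draw)
def oN : Outcome := (.Lwin, .Rwin)
def oD : Outcome := (.draw, .draw)
def oRminus : Outcome := (.draw, .Rwin)
def oR : Outcome := (.Rwin, .Rwin)

/-- The updated game `G_u` after Left has picked `u`. -/
def subL (G : Game) (u : ℕ) : Game where
  V := G.V.erase u
  EL := G.EL.image fun e => e.erase u
  ER := G.ER.filter fun e => u ∉ e

/-- The updated game `G^u` after Right has picked `u`. -/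
def subR (G : Game) (u : ℕ) : Game where
  V := G.V.erase u
  EL := G.EL.filter fun e => u ∉ e
  ER := G.ER.image fun e => e.erase u

/-- The updated game `G_u^v` after Left has picked `u` and Right has picked `v`. -/
def updLR (G : Game) (u v : ℕ) : Game where
  V := (G.V.erase u).erase v
  EL := (G.EL.filter fun e => v ∉ e).image fun e => e.erase u
  ER := (G.ER.filter fun e => u ∉ e).image fun e => e.erase v

/-- The disjoint union of two games. -/
def gunion (G G' : Game) : Game where
  V := G.V ∪ G'.V
  EL := G.EL ∪ G'.EL
  ER := G.ER ∪ G'.ER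
@[simp] lemma Player.other_other (p : Player) : p.other.other = p := by cases p <;> rfl

lemma Player.eq_other_of_ne {q p : Player} (h : q ≠ p) : q = p.other := by
  cases q <;> cases p <;> simp_all [Player.other]

@[simp] lemma Player.other_ne (p : Player) : p.other ≠ p := by
  cases p <;> simp [Player.other]

lemma mover_succ (s : Player) (i : ℕ) : mover s (i+1) = (mover s i).other := by
  rcases Nat.mod_two_eq_zero_or_one i with h | h <;>
    simp [mover, h, Nat.succ_mod_two_eq_zero_iff, Nat.succ_mod_two_eq_one_iff] <;> omega

lemma mover_ne_iff {s p : Player} {i : ℕ} : mover s i ≠ p ↔ mover s i = p.other := by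
  constructor
  · exact Player.eq_other_of_ne
  · rintro h; rw [h]; exact Player.other_ne p

@[simp] lemma picked_nil (s p : Player) : picked s p [] = ∅ := by simp [picked]

lemma picked_append (s p : Player) (h : List ℕ) (x : ℕ) :
    picked s p (h ++ [x]) =
      if mover s h.length = p then insert x (picked s p h) else picked s p h := by
  unfold picked
  have hlen : (h ++ [x]).length = h.length + 1 := by simp
  rw [hlen, Finset.range_add_one, Finset.filter_insert]
  have himg : ∀ (T : Finset ℕ), T ⊆ Finset.range h.length →
      (T.image fun i => (h ++ [x]).getD i 0) = T.image fun i => h.getD i 0 := by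
    intro T hT
    apply Finset.image_congr
    intro i hi
    have : i < h.length := Finset.mem_range.mp (hT hi)
    exact List.getD_append _ _ _ _ this
  by_cases hm : mover s h.length = p
  · rw [if_pos hm, Finset.image_insert]
    have : (h ++ [x]).getD h.length 0 = x := by
      rw [List.getD_eq_getElem?_getD]
      simp
    rw [this, if_pos hm, himg _ (Finset.filter_subset _ _)]
  · rw [if_neg hm, if_neg hm, himg _ (Finset.filter_subset _ _)]

lemma picked_subset (s p : Player) (h : List ℕ) : picked s p h ⊆ h.toFinset := by
  intro x hx
  simp only [picked, Finset.mem_image, Finset.mem_filter, Finset.mem_range] at hx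
  obtain ⟨i, ⟨hi, _⟩, hx⟩ := hx
  rw [List.getD_eq_getElem _ _ hi] at hx
  rw [List.mem_toFinset, ← hx]
  exact List.getElem_mem _

lemma picked_union (s : Player) (h : List ℕ) :
    picked s .L h ∪ picked s .R h = h.toFinset := by
  apply Finset.Subset.antisymm
  · exact Finset.union_subset (picked_subset _ _ _) (picked_subset _ _ _)
  · intro x hx
    rw [List.mem_toFinset] at hx
    obtain ⟨i, hi, hx⟩ := List.mem_iff_getElem.mp hx
    have hg : h.getD i 0 = x := by rw [List.getD_eq_getElem _ _ hi]; exact hx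
    have : ∀ p : Player, mover s i = p → x ∈ picked s p h := by
      intro p hp
      simp only [picked, Finset.mem_image, Finset.mem_filter, Finset.mem_range]
      exact ⟨i, ⟨hi, hp⟩, hg⟩
    rcases hq : mover s i with _ | _
    · exact Finset.mem_union_left _ (this _ hq)
    · exact Finset.mem_union_right _ (this _ hq)

lemma validHist_take {G : Game} {s : Player} {h : List ℕ} (hv : ValidHist G s h) (k : ℕ) :
    ValidHist G s (h.take k) := by
  obtain ⟨hnd, hmem, hend⟩ := hv
  refine ⟨hnd.sublist (List.take_sublist _ _), fun x hx => hmem x ((List.take_sublist _ _).mem hx), ?_⟩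
  intro j hj
  rw [List.length_take] at hj
  rw [List.take_take]
  have hje : min j k = j := by omega
  rw [hje]
  exact hend j (by omega)

lemma follows_take {s p : Player} {σ : Strategy} {h : List ℕ} (hf : Follows s p σ h) (k : ℕ) :
    Follows s p σ (h.take k) := by
  intro j hj hm
  rw [List.length_take] at hj
  have hjk : j < k := (lt_min_iff.mp hj).1
  have hjl : j < h.length := (lt_min_iff.mp hj).2
  rw [List.take_take]
  have : min j k = j := by omega
  rw [this]
  have := hf j hjl hm
  rw [← this]
  have hj' : j < (h.take k).length := by rw [List.length_take]; omega
  rw [List.getD_eq_getElem _ _ hj', List.getD_eq_getElem _ _ hjl]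
  exact List.getElem_take

lemma length_le_card {G : Game} {s : Player} {h : List ℕ} (hv : ValidHist G s h) :
    h.length ≤ G.V.card := by
  have h1 : h.toFinset.card = h.length := List.toFinset_card_of_nodup hv.1
  have h2 : h.toFinset ⊆ G.V := fun x hx => hv.2.1 x (List.mem_toFinset.mp hx)
  rw [← h1]
  exact Finset.card_le_card h2

lemma fills_mono {E : Finset (Finset ℕ)} {S S' : Finset ℕ} (hss : S ⊆ S') :
    fills E S → fills E S' := fun ⟨e, he, hes⟩ => ⟨e, he, hes.trans hss⟩

lemma fills_union {E E' : Finset (Finset ℕ)} {S : Finset ℕ} :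
    fills (E ∪ E') S ↔ fills E S ∨ fills E' S := by
  constructor
  · rintro ⟨e, he, hes⟩
    rcases Finset.mem_union.mp he with h | h
    · exact Or.inl ⟨e, h, hes⟩
    · exact Or.inr ⟨e, h, hes⟩
  · rintro (⟨e, he, hes⟩ | ⟨e, he, hes⟩)
    · exact ⟨e, Finset.mem_union_left _ he, hes⟩
    · exact ⟨e, Finset.mem_union_right _ he, hes⟩

lemma ended_of_fills {G : Game} {s : Player} {h : List ℕ} {q : Player}
    (hf : fills (G.edges q) (picked s q h)) : ended G s h := by
  cases q
  · exact Or.inl hf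
  · exact Or.inr hf

/-- `σ` keeps the opponent from ever filling an edge, along any valid followed history. -/
def Safe (G : Game) (s p : Player) (σ : Strategy) : Prop :=
  ∀ h, ValidHist G s h → Follows s p σ h →
    ¬ fills (G.edges p.other) (picked s p.other h)

lemma take_pred_concat {h : List ℕ} (hne : h ≠ []) :
    h = h.take (h.length - 1) ++ [h.getLast hne] := by
  conv_lhs => rw [← List.dropLast_append_getLast hne]
  rw [List.dropLast_eq_take]

lemma safe_of_winning {G : Game} {s p : Player} {σ : Strategy} (hWF : WellFormed G)
    (hwin : ∀ h, ValidHist G s h → Follows s p σ h → Complete G s h →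
      fills (G.edges p) (picked s p h)) : Safe G s p σ := by
  intro h hv hf hfil
  have hend : ended G s h := ended_of_fills hfil
  have hcomp : Complete G s h := Or.inl hend
  have hfp : fills (G.edges p) (picked s p h) := hwin h hv hf hcomp
  -- h is nonempty, else no edge can be filled
  rcases List.eq_nil_or_concat h with rfl | ⟨l, x, rfl⟩
  · obtain ⟨e, he, hes⟩ := hfp
    have hne : e.Nonempty := by
      cases p
      · exact (hWF.1 e he).2
      · exact (hWF.2 e he).2
    simp [picked_nil] at hes
    rw [hes] at hne
    exact Finset.not_nonempty_empty hne
  · rw [List.concat_eq_append] at hv hf hfil hend hcomp hfp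
    have hlast : ∀ r : Player, mover s l.length ≠ r →
        picked s r (l ++ [x]) = picked s r l := by
      intro r hr
      rw [picked_append, if_neg hr]
    have hnoend : ¬ ended G s l := by
      have := hv.2.2 l.length (by simp)
      rwa [List.take_left] at this
    by_cases hq : mover s l.length = p
    · have := hlast p.other (by rw [hq]; exact fun he => Player.other_ne p he.symm)
      rw [this] at hfil
      exact hnoend (ended_of_fills hfil)
    · have := hlast p hq
      rw [this] at hfp
      exact hnoend (ended_of_fills hfp)

lemma safe_of_nonlosing {G : Game} {s p : Player} {σ : Strategy}
    (hnl : ∀ h, ValidHist G s h → Follows s p σ h → Complete G s h →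
      ¬ fills (G.edges p.other) (picked s p.other h)) : Safe G s p σ := by
  intro h hv hf hfil
  exact hnl h hv hf (Or.inl (ended_of_fills hfil)) hfil

/-! ### Zermelo-style determinacy -/

open Classical in
/-- `p` can force the play to reach a terminal position satisfying `W`. -/
noncomputable def force (G : Game) (s p : Player) (W : List ℕ → Prop) (h : List ℕ) : Prop :=
  if ended G s h then W h
  else if hlen : h.length < G.V.card then
    (if mover s h.length = p
     then ∃ x, x ∈ G.V ∧ x ∉ h ∧ force G s p W (h ++ [x])
     else ∀ x, x ∈ G.V → x ∉ h → force G s p W (h ++ [x]))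
  else W h
termination_by G.V.card - h.length
decreasing_by all_goals (simp only [List.length_append, List.length_cons, List.length_nil]; omega)

lemma force_of_ended {G : Game} {s p : Player} {W : List ℕ → Prop} {h : List ℕ}
    (he : ended G s h) : force G s p W h ↔ W h := by
  rw [force]; simp [he]

lemma force_of_full {G : Game} {s p : Player} {W : List ℕ → Prop} {h : List ℕ}
    (he : ¬ ended G s h) (hl : ¬ h.length < G.V.card) : force G s p W h ↔ W h := by
  rw [force]; simp [he, hl]

lemma force_of_turn {G : Game} {s p : Player} {W : List ℕ → Prop} {h : List ℕ}
    (he : ¬ ended G s h) (hl : h.length < G.V.card) (hm : mover s h.length = p) :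
    force G s p W h ↔ ∃ x, x ∈ G.V ∧ x ∉ h ∧ force G s p W (h ++ [x]) := by
  rw [force]; simp [he, hl, hm]

lemma force_of_wait {G : Game} {s p : Player} {W : List ℕ → Prop} {h : List ℕ}
    (he : ¬ ended G s h) (hl : h.length < G.V.card) (hm : ¬ mover s h.length = p) :
    force G s p W h ↔ ∀ x, x ∈ G.V → x ∉ h → force G s p W (h ++ [x]) := by
  rw [force]; simp [he, hl, hm]

open Classical in
/-- A strategy following the forcing witness when possible, otherwise any free vertex. -/
noncomputable def fstrat (G : Game) (s p : Player) (W : List ℕ → Prop) : Strategy := fun h =>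
  if hx : ∃ x, x ∈ G.V ∧ x ∉ h ∧ force G s p W (h ++ [x]) then hx.choose
  else if hy : ∃ x, x ∈ G.V ∧ x ∉ h then hy.choose else 0

lemma exists_free {G : Game} {s : Player} {h : List ℕ} (hv : ValidHist G s h)
    (hlen : h.length < G.V.card) : ∃ x, x ∈ G.V ∧ x ∉ h := by
  have h1 : h.toFinset.card = h.length := List.toFinset_card_of_nodup hv.1
  have h2 : ¬ (G.V ⊆ h.toFinset) := by
    intro hsub
    have := Finset.card_le_card hsub
    omega
  obtain ⟨x, hx1, hx2⟩ := Finset.not_subset.mp h2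
  exact ⟨x, hx1, fun hc => hx2 (List.mem_toFinset.mpr hc)⟩

lemma fstrat_legal (G : Game) (s p : Player) (W : List ℕ → Prop) :
    Legal G s p (fstrat G s p W) := by
  intro h hv _ _ hlen _
  unfold fstrat
  by_cases hx : ∃ x, x ∈ G.V ∧ x ∉ h ∧ force G s p W (h ++ [x])
  · rw [dif_pos hx]
    exact ⟨hx.choose_spec.1, hx.choose_spec.2.1⟩
  · rw [dif_neg hx, dif_pos (exists_free hv hlen)]
    exact (exists_free hv hlen).choose_spec

lemma force_run {G : Game} {s p : Player} {W : List ℕ → Prop}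
    (h0 : force G s p W []) :
    ∀ h, ValidHist G s h → Follows s p (fstrat G s p W) h → force G s p W h := by
  intro h
  induction h using List.reverseRecOn with
  | nil => intro _ _; exact h0
  | append_singleton l x ih =>
    intro hv hf
    have hvl : ValidHist G s l := by
      have := validHist_take hv l.length
      rwa [List.take_left] at this
    have hfl : Follows s p (fstrat G s p W) l := by
      have := follows_take hf l.length
      rwa [List.take_left] at this
    have hfor := ih hvl hfl
    have hne : ¬ ended G s l := by
      have := hv.2.2 l.length (by simp)
      rwa [List.take_left] at this
    have hlen : l.length < G.V.card := by
      have := length_le_card hv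
      simp only [List.length_append, List.length_cons, List.length_nil] at this
      omega
    by_cases hm : mover s l.length = p
    · rw [force_of_turn hne hlen hm] at hfor
      have hxeq : x = fstrat G s p W l := by
        have := hf l.length (by simp) hm
        rw [List.take_left] at this
        rw [← this, List.getD_eq_getElem _ _ (by simp : l.length < (l ++ [x]).length)]
        simp
      have hch : fstrat G s p W l = hfor.choose := dif_pos hfor
      rw [hxeq, hch]
      exact hfor.choose_spec.2.2
    · rw [force_of_wait hne hlen hm] at hfor
      have hxV : x ∈ G.V := hv.2.1 x (by simp)
      have hxl : x ∉ l := by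
        have := hv.1
        rw [List.nodup_append] at this
        intro hc
        exact this.2.2 x hc x (by simp) rfl
      exact hfor x hxV hxl

lemma force_complete {G : Game} {s p : Player} {W : List ℕ → Prop}
    (h0 : force G s p W []) :
    ∀ h, ValidHist G s h → Follows s p (fstrat G s p W) h → Complete G s h → W h := by
  intro h hv hf hc
  have := force_run h0 h hv hf
  by_cases hend : ended G s h
  · rwa [force_of_ended hend] at this
  · rcases hc with hend' | hlen
    · exact absurd hend' hend
    · rwa [force_of_full hend (by omega)] at this

lemma not_force {G : Game} {s : Player} {q : Player} {W : List ℕ → Prop} :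
    ∀ h, ¬ force G s q W h → force G s q.other (fun l => ¬ W l) h := by
  suffices H : ∀ n h, G.V.card - h.length ≤ n →
      ¬ force G s q W h → force G s q.other (fun l => ¬ W l) h by
    exact fun h => H _ h le_rfl
  intro n
  induction n with
  | zero =>
    intro h hn hnf
    by_cases hend : ended G s h
    · rw [force_of_ended hend] at hnf ⊢; exact hnf
    · have hl : ¬ h.length < G.V.card := by omega
      rw [force_of_full hend hl] at hnf ⊢; exact hnf
  | succ n ih =>
    intro h hn hnf
    by_cases hend : ended G s h
    · rw [force_of_ended hend] at hnf ⊢; exact hnf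
    · by_cases hl : h.length < G.V.card
      · by_cases hm : mover s h.length = q
        · rw [force_of_turn hend hl hm] at hnf
          have hm' : ¬ mover s h.length = q.other := by
            rw [hm]; exact (Player.other_ne q).symm
          rw [force_of_wait hend hl hm']
          intro x hxV hxh
          apply ih _ (by simp; omega)
          intro hfc
          exact hnf ⟨x, hxV, hxh, hfc⟩
        · rw [force_of_wait hend hl hm] at hnf
          push_neg at hnf
          obtain ⟨x, hxV, hxh, hfc⟩ := hnf
          rw [force_of_turn hend hl (mover_ne_iff.mp hm)]
          exact ⟨x, hxV, hxh, ih _ (by simp; omega) hfc⟩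
      · rw [force_of_full hend hl] at hnf ⊢; exact hnf

lemma winsAs_of_force {G : Game} {s p : Player}
    (h0 : force G s p (fun h => fills (G.edges p) (picked s p h)) []) : WinsAs G s p :=
  ⟨_, fstrat_legal G s p _, force_complete h0⟩

lemma nonLosingAs_of_not_force {G : Game} {s p : Player}
    (h0 : ¬ force G s p.other (fun h => fills (G.edges p.other) (picked s p.other h)) []) :
    NonLosingAs G s p := by
  have := not_force _ h0
  rw [Player.other_other] at this
  exact ⟨_, fstrat_legal G s p _, force_complete this⟩

lemma determinacy (G : Game) (s : Player) :
    WinsAs G s .L ∨ WinsAs G s .R ∨ (NonLosingAs G s .L ∧ NonLosingAs G s .R) := by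
  by_cases h1 : force G s .L (fun h => fills (G.edges .L) (picked s .L h)) []
  · exact Or.inl (winsAs_of_force h1)
  by_cases h2 : force G s .R (fun h => fills (G.edges .R) (picked s .R h)) []
  · exact Or.inr (Or.inl (winsAs_of_force h2))
  · refine Or.inr (Or.inr ⟨?_, ?_⟩)
    · exact nonLosingAs_of_not_force (p := .L) h2
    · exact nonLosingAs_of_not_force (p := .R) h1
/-! ### The combined strategy on a disjoint union -/

section Union

variable (G G' : Game) (σ' τ : Strategy)

open Classical in
/-- An arbitrary fresh vertex of `G'` (used as an imagined move of Right). -/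
noncomputable def ufake (b : List ℕ) : ℕ :=
  if hy : ∃ x, x ∈ G'.V ∧ x ∉ b then hy.choose else 0

lemma ufake_spec {b : List ℕ} (hy : ∃ x, x ∈ G'.V ∧ x ∉ b) :
    ufake G' b ∈ G'.V ∧ ufake G' b ∉ b := by
  rw [ufake, dif_pos hy]; exact hy.choose_spec

/-- One step of the simulation bookkeeping: incorporate the real move `x`
made by player `m` into the pair of imagined histories. -/
noncomputable def ustep (st : List ℕ × List ℕ) (m : Player) (x : ℕ) : List ℕ × List ℕ :=
  if x ∈ G.V then (st.1 ++ [x], st.2)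
  else match m with
    | .R => if x ∈ st.2 then st else (st.1, st.2 ++ [x])
    | .L => if st.2.length % 2 = 0 then (st.1, st.2 ++ [x])
            else (st.1, st.2 ++ [ufake G' st.2, x])

noncomputable def usimAux : ℕ → (List ℕ × List ℕ) → List ℕ → (List ℕ × List ℕ)
  | _, st, [] => st
  | i, st, x :: t => usimAux (i+1) (ustep G G' st (mover .L i) x) t

/-- The pair of imagined histories (in `G`, resp. `G'`) after the real history `h`. -/
noncomputable def usim (h : List ℕ) : List ℕ × List ℕ := usimAux G G' 0 ([], []) h

lemma usimAux_append (x : ℕ) : ∀ (l : List ℕ) (i : ℕ) (st : List ℕ × List ℕ),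
    usimAux G G' i st (l ++ [x]) = ustep G G' (usimAux G G' i st l) (mover .L (i + l.length)) x
  | [], i, st => by simp [usimAux]
  | y :: t, i, st => by
    show usimAux G G' (i+1) _ (t ++ [x]) = _
    rw [usimAux_append x t (i+1)]
    have he : i + 1 + t.length = i + (y :: t).length := by simp; omega
    rw [he]
    rfl

lemma usim_append (h : List ℕ) (x : ℕ) :
    usim G G' (h ++ [x]) = ustep G G' (usim G G' h) (mover .L h.length) x := by
  rw [usim, usimAux_append]
  simp [usim]

lemma usim_fst (h : List ℕ) : (usim G G' h).1 = h.filter (· ∈ G.V) := by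
  induction h using List.reverseRecOn with
  | nil => simp [usim, usimAux]
  | append_singleton l x ih =>
    rw [usim_append, List.filter_append]
    unfold ustep
    by_cases hx : x ∈ G.V
    · simp [hx, ih]
    · cases mover Player.L l.length <;> simp only [if_neg hx] <;>
        first
          | (split <;> simp [ih, hx])
          | simp [ih, hx]

/-- The combined strategy for Left on the union. -/
noncomputable def ustrat : Strategy := fun h =>
  let st := usim G G' h
  if st.1.length % 2 = 1 ∧ st.1.length < G.V.card then τ st.1
  else if st.2.length % 2 = 0 then σ' st.2
  else σ' (st.2 ++ [ufake G' st.2])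

end Union
/-! ### Helper lemmas for extending histories -/

lemma mover_L_even {n : ℕ} (h : n % 2 = 0) : mover .L n = .L := by
  rw [mover, if_pos h]

lemma mover_L_odd {n : ℕ} (h : n % 2 = 1) : mover .L n = .R := by
  rw [mover, if_neg (by omega)]; rfl

lemma mover_R_even {n : ℕ} (h : n % 2 = 0) : mover .R n = .R := by
  rw [mover, if_pos h]

lemma mover_R_odd {n : ℕ} (h : n % 2 = 1) : mover .R n = .L := by
  rw [mover, if_neg (by omega)]; rfl

lemma validHist_append {G : Game} {s : Player} {l : List ℕ} {x : ℕ}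
    (hv : ValidHist G s l) (hxV : x ∈ G.V) (hxl : x ∉ l) (hne : ¬ ended G s l) :
    ValidHist G s (l ++ [x]) := by
  refine ⟨?_, ?_, ?_⟩
  · rw [List.nodup_append]
    refine ⟨hv.1, List.nodup_singleton x, ?_⟩
    intro y hy z hz hyz
    simp only [List.mem_singleton] at hz
    subst hz hyz
    exact hxl hy
  · intro y hy
    rcases List.mem_append.mp hy with h | h
    · exact hv.2.1 y h
    · simp only [List.mem_singleton] at h; subst h; exact hxV
  · intro k hk
    simp only [List.length_append, List.length_singleton] at hk
    have hkle : k ≤ l.length := by omega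
    rw [List.take_append_of_le_length hkle]
    rcases lt_or_eq_of_le hkle with h | h
    · exact hv.2.2 k h
    · subst h; rw [List.take_length]; exact hne

lemma follows_append {s p : Player} {σ : Strategy} {l : List ℕ} {x : ℕ}
    (hfl : Follows s p σ l) (hx : mover s l.length = p → x = σ l) :
    Follows s p σ (l ++ [x]) := by
  intro k hk hm
  simp only [List.length_append, List.length_singleton] at hk
  rcases lt_or_eq_of_le (Nat.lt_succ_iff.mp hk) with h | h
  · rw [List.getD_append _ _ _ _ h, List.take_append_of_le_length (le_of_lt h)]
    exact hfl k h hm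
  · subst h
    rw [List.take_left, List.getD_append_right _ _ _ _ le_rfl]
    simp only [Nat.sub_self, List.getD_cons_zero]
    exact hx hm

lemma getD_concat_self (l : List ℕ) (x : ℕ) : (l ++ [x]).getD l.length 0 = x := by
  rw [List.getD_append_right _ _ _ _ le_rfl]
  simp

lemma picked_inter_of_mem {s p : Player} {h : List ℕ} {x : ℕ} {W : Finset ℕ}
    (hm : mover s h.length = p) (hxW : x ∈ W) :
    picked s p (h ++ [x]) ∩ W = insert x (picked s p h ∩ W) := by
  rw [picked_append, if_pos hm, Finset.insert_inter_of_mem hxW]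

lemma picked_inter_of_not_mem {s p : Player} {h : List ℕ} {x : ℕ} {W : Finset ℕ}
    (hm : mover s h.length = p) (hxW : x ∉ W) :
    picked s p (h ++ [x]) ∩ W = picked s p h ∩ W := by
  rw [picked_append, if_pos hm, Finset.insert_inter_of_notMem hxW]

lemma picked_append_other {s p : Player} {h : List ℕ} {x : ℕ}
    (hm : mover s h.length ≠ p) :
    picked s p (h ++ [x]) = picked s p h := by
  rw [picked_append, if_neg hm]

/-! ### The simulation invariant -/

structure UInv (G G' : Game) (τ σ' : Strategy) (h a b : List ℕ) : Prop where
  va : ValidHist G .R a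
  fa : Follows .R .L τ a
  vb : ValidHist G' .L b
  fb : Follows .L .L σ' b
  aL : picked .R .L a = picked .L .L h ∩ G.V
  aR : picked .R .R a = picked .L .R h ∩ G.V
  bL : picked .L .L b = picked .L .L h ∩ G'.V
  bR : picked .L .R h ∩ G'.V ⊆ picked .L .R b
  par : (h.length % 2 = 1 → b.length % 2 = 1 ∧ (a.length % 2 = 0 ∨ a.length = G.V.card)) ∧
        (h.length % 2 = 0 →
          (a.length % 2 = 1 ∧ a.length ≤ G.V.card ∧ b.length % 2 = 1) ∨
          ((a.length % 2 = 0 ∨ a.length = G.V.card) ∧ b.length % 2 = 1) ∨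
          ((a.length % 2 = 0 ∨ a.length = G.V.card) ∧ b.length % 2 = 0))

lemma uinv {G G' : Game} {σ' τ : Strategy}
    (hdisj : Disjoint G.V G'.V)
    (hτL : Legal G .R .L τ) (hτS : Safe G .R .L τ)
    (hσL : Legal G' .L .L σ')
    (hσW : ∀ h, ValidHist G' .L h → Follows .L .L σ' h → Complete G' .L h →
      fills (G'.edges .L) (picked .L .L h))
    (hσS : Safe G' .L .L σ') :
    ∀ h, ValidHist (gunion G G') .L h → Follows .L .L (ustrat G G' σ' τ) h →
      UInv G G' τ σ' h (usim G G' h).1 (usim G G' h).2 := by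
  intro h
  induction h using List.reverseRecOn with
  | nil =>
    intro _ _
    show UInv G G' τ σ' [] [] []
    refine ⟨⟨List.nodup_nil, by simp, by simp⟩, by intro k hk; simp at hk,
      ⟨List.nodup_nil, by simp, by simp⟩, by intro k hk; simp at hk,
      by simp, by simp, by simp, by simp, ?_⟩
    constructor
    · intro hc; simp at hc
    · intro _; right; right
      exact ⟨Or.inl (by simp), by simp⟩
  | append_singleton l x ih =>
    intro hv hf
    have hvl : ValidHist (gunion G G') .L l := by
      have := validHist_take hv l.length; rwa [List.take_left] at this
    have hfl : Follows .L .L (ustrat G G' σ' τ) l := by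
      have := follows_take hf l.length; rwa [List.take_left] at this
    have inv := ih hvl hfl
    set a := (usim G G' l).1 with ha
    set b := (usim G G' l).2 with hb
    have hul : usim G G' l = (a, b) := rfl
    have hamem : ∀ y, y ∈ a → y ∈ l := by
      intro y hy
      rw [ha, usim_fst] at hy
      exact (List.mem_filter.mp hy).1
    have hnoend : ¬ ended (gunion G G') .L l := by
      have := hv.2.2 l.length (by simp); rwa [List.take_left] at this
    have hxU : x ∈ G.V ∪ G'.V := hv.2.1 x (by simp)
    have hxl : x ∉ l := by
      have hnd := hv.1
      rw [List.nodup_append] at hnd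
      exact fun hc => hnd.2.2 x hc x (by simp) rfl
    have hanotend : ¬ ended G .R a := by
      rintro (⟨e, he, hes⟩ | hfill)
      · rw [inv.aL] at hes
        exact hnoend (Or.inl ⟨e, Finset.mem_union_left _ he,
          hes.trans Finset.inter_subset_left⟩)
      · exact hτS a inv.va inv.fa hfill
    have hbnotend : ¬ ended G' .L b := by
      rintro (⟨e, he, hes⟩ | hfill)
      · rw [inv.bL] at hes
        exact hnoend (Or.inl ⟨e, Finset.mem_union_right _ he,
          hes.trans Finset.inter_subset_left⟩)
      · exact hσS b inv.vb inv.fb hfill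
    have hbne : b.length ≠ G'.V.card := by
      intro hfull
      obtain ⟨e, he, hes⟩ := hσW b inv.vb inv.fb (Or.inr hfull)
      rw [inv.bL] at hes
      exact hnoend (Or.inl ⟨e, Finset.mem_union_right _ he,
        hes.trans Finset.inter_subset_left⟩)
    have hblt : b.length < G'.V.card := lt_of_le_of_ne (length_le_card inv.vb) hbne
    have hale : a.length ≤ G.V.card := length_le_card inv.va
    have hafull : a.length = G.V.card → x ∉ G.V := by
      intro hfull hxV
      have hsub : a.toFinset ⊆ G.V := fun y hy => inv.va.2.1 y (List.mem_toFinset.mp hy)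
      have hcard : a.toFinset.card = a.length := List.toFinset_card_of_nodup inv.va.1
      have heq : a.toFinset = G.V := Finset.eq_of_subset_of_card_le hsub (by omega)
      exact hxl (hamem x (List.mem_toFinset.mp (heq ▸ hxV)))
    rcases Nat.mod_two_eq_zero_or_one l.length with hn | hn
    · -- LEFT's move
      have hm : mover .L l.length = .L := mover_L_even hn
      have hmR : mover .L l.length ≠ .R := by rw [hm]; decide
      have hxx : x = ustrat G G' σ' τ l := by
        have := hf l.length (by simp) hm
        rwa [List.take_left, getD_concat_self] at this
      by_cases c1 : a.length % 2 = 1 ∧ a.length < G.V.card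
      · -- Left answers in G, following τ
        have hxτ : x = τ a := by
          rw [hxx, ustrat]; simp only [← ha, ← hb, if_pos c1]
        have hmova : mover .R a.length = .L := mover_R_odd c1.1
        have hτleg := hτL a inv.va inv.fa hanotend c1.2 hmova
        have hxV : x ∈ G.V := hxτ ▸ hτleg.1
        have hxa : x ∉ a := hxτ ▸ hτleg.2
        have hxV' : x ∉ G'.V := Finset.disjoint_left.mp hdisj hxV
        have hstep : usim G G' (l ++ [x]) = (a ++ [x], b) := by
          rw [usim_append, hul, hm, ustep, if_pos hxV]
        rw [hstep]
        have hbodd : b.length % 2 = 1 := by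
          rcases (inv.par.2 hn) with h3 | h3 | h3
          · exact h3.2.2
          · exact h3.2
          · rcases h3.1 with h4 | h4 <;> omega
        refine ⟨validHist_append inv.va hxV hxa hanotend,
          follows_append inv.fa (fun _ => hxτ), inv.vb, inv.fb, ?_, ?_, ?_, ?_, ?_⟩
        · rw [picked_append, if_pos hmova, picked_inter_of_mem hm hxV, inv.aL]
        · rw [picked_append_other (by rw [hmova]; decide),
            picked_append_other hmR, inv.aR]
        · rw [picked_inter_of_not_mem hm hxV', inv.bL]
        · rw [picked_append_other hmR]
          exact inv.bR
        · constructor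
          · intro _
            refine ⟨hbodd, Or.inl ?_⟩
            simp only [List.length_append, List.length_singleton]
            omega
          · intro hc
            simp only [List.length_append, List.length_singleton] at hc
            omega
      · -- Left plays in G'
        have haec : a.length % 2 = 0 ∨ a.length = G.V.card := by
          rcases Nat.mod_two_eq_zero_or_one a.length with h2 | h2
          · exact Or.inl h2
          · right
            rcases lt_or_eq_of_le hale with h3 | h3
            · exact absurd ⟨h2, h3⟩ c1
            · exact h3
        by_cases c2 : b.length % 2 = 0
        · -- directly answer in b
          have hxσ : x = σ' b := by
            rw [hxx, ustrat]; simp only [← ha, ← hb, if_neg c1, if_pos c2]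
          have hmovb : mover .L b.length = .L := mover_L_even c2
          have hσleg := hσL b inv.vb inv.fb hbnotend hblt hmovb
          have hxV' : x ∈ G'.V := hxσ ▸ hσleg.1
          have hxb : x ∉ b := hxσ ▸ hσleg.2
          have hxV : x ∉ G.V := Finset.disjoint_left.mp hdisj.symm hxV'
          have hstep : usim G G' (l ++ [x]) = (a, b ++ [x]) := by
            rw [usim_append, hul, hm, ustep, if_neg hxV]
            simp only [if_pos c2]
          rw [hstep]
          refine ⟨inv.va, inv.fa, validHist_append inv.vb hxV' hxb hbnotend,
            follows_append inv.fb (fun _ => hxσ), ?_, ?_, ?_, ?_, ?_⟩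
          · rw [picked_inter_of_not_mem hm hxV]
            exact inv.aL
          · rw [picked_append_other hmR]
            exact inv.aR
          · rw [picked_append, if_pos hmovb, picked_inter_of_mem hm hxV', inv.bL]
          · rw [picked_append_other hmR, picked_append_other (by rw [hmovb]; decide)]
            exact inv.bR
          · constructor
            · intro _
              exact ⟨by simp only [List.length_append, List.length_singleton]; omega, haec⟩
            · intro hc
              simp only [List.length_append, List.length_singleton] at hc
              omega
        · -- resynchronize with a fake move, then answer in b
          have hbodd : b.length % 2 = 1 := by omega
          have hfree := exists_free inv.vb hblt
          obtain ⟨hfV, hfb⟩ := ufake_spec (G' := G') hfree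
          set f := ufake G' b with hfdef
          have hmovf : mover .L b.length = .R := mover_L_odd hbodd
          have hmovfL : mover .L b.length ≠ .L := by rw [hmovf]; decide
          have hvbf : ValidHist G' .L (b ++ [f]) := validHist_append inv.vb hfV hfb hbnotend
          have hfbf : Follows .L .L σ' (b ++ [f]) :=
            follows_append inv.fb (fun hc => absurd hc hmovfL)
          have hpLf : picked .L .L (b ++ [f]) = picked .L .L b := picked_append_other hmovfL
          have hbfnotend : ¬ ended G' .L (b ++ [f]) := by
            rintro (⟨e, he, hes⟩ | hfill)
            · rw [hpLf, inv.bL] at hes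
              exact hnoend (Or.inl ⟨e, Finset.mem_union_right _ he,
                hes.trans Finset.inter_subset_left⟩)
            · exact hσS _ hvbf hfbf hfill
          have hbfne : (b ++ [f]).length ≠ G'.V.card := by
            intro hfull
            obtain ⟨e, he, hes⟩ := hσW _ hvbf hfbf (Or.inr hfull)
            rw [hpLf, inv.bL] at hes
            exact hnoend (Or.inl ⟨e, Finset.mem_union_right _ he,
              hes.trans Finset.inter_subset_left⟩)
          have hbflt : (b ++ [f]).length < G'.V.card :=
            lt_of_le_of_ne (length_le_card hvbf) hbfne
          have hmovbf : mover .L (b ++ [f]).length = .L := by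
            apply mover_L_even
            simp only [List.length_append, List.length_singleton]
            omega
          have hσleg := hσL _ hvbf hfbf hbfnotend hbflt hmovbf
          have hxσ : x = σ' (b ++ [f]) := by
            rw [hxx, ustrat]; simp only [← ha, ← hb, if_neg c1, if_neg c2, ← hfdef]
          have hxV' : x ∈ G'.V := hxσ ▸ hσleg.1
          have hxbf : x ∉ b ++ [f] := hxσ ▸ hσleg.2
          have hxV : x ∉ G.V := Finset.disjoint_left.mp hdisj.symm hxV'
          have hstep : usim G G' (l ++ [x]) = (a, (b ++ [f]) ++ [x]) := by
            rw [usim_append, hul, hm, ustep, if_neg hxV]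
            simp only [if_neg c2]
            rw [List.append_assoc]
            rfl
          rw [hstep]
          refine ⟨inv.va, inv.fa, validHist_append hvbf hxV' hxbf hbfnotend,
            follows_append hfbf (fun _ => hxσ), ?_, ?_, ?_, ?_, ?_⟩
          · rw [picked_inter_of_not_mem hm hxV]
            exact inv.aL
          · rw [picked_append_other hmR]
            exact inv.aR
          · rw [picked_append, if_pos hmovbf, hpLf, picked_inter_of_mem hm hxV', inv.bL]
          · rw [picked_append_other hmR,
              picked_append_other (by rw [hmovbf]; decide),
              picked_append, if_pos hmovf]
            exact inv.bR.trans (Finset.subset_insert _ _)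
          · constructor
            · intro _
              refine ⟨?_, haec⟩
              simp only [List.length_append, List.length_singleton]
              omega
            · intro hc
              simp only [List.length_append, List.length_singleton] at hc
              omega
    · -- RIGHT's move
      have hm : mover .L l.length = .R := mover_L_odd hn
      have hmL : mover .L l.length ≠ .L := by rw [hm]; decide
      have hpar := inv.par.1 hn
      by_cases hxV : x ∈ G.V
      · -- Right moves in G
        have hxV' : x ∉ G'.V := Finset.disjoint_left.mp hdisj hxV
        have haeven : a.length % 2 = 0 := by
          rcases hpar.2 with h2 | h2
          · exact h2
          · exact absurd hxV (hafull h2)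
        have hmova : mover .R a.length = .R := mover_R_even haeven
        have hxa : x ∉ a := fun hc => hxl (hamem x hc)
        have hstep : usim G G' (l ++ [x]) = (a ++ [x], b) := by
          rw [usim_append, hul, hm, ustep, if_pos hxV]
        rw [hstep]
        have hva' : ValidHist G .R (a ++ [x]) := validHist_append inv.va hxV hxa hanotend
        refine ⟨hva', follows_append inv.fa (fun hc => absurd hc (by rw [hmova]; decide)),
          inv.vb, inv.fb, ?_, ?_, ?_, ?_, ?_⟩
        · rw [picked_append_other (by rw [hmova]; decide), picked_append_other hmL, inv.aL]
        · rw [picked_append, if_pos hmova, picked_inter_of_mem hm hxV, inv.aR]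
        · rw [picked_append_other hmL, inv.bL]
        · rw [picked_inter_of_not_mem hm hxV']
          exact inv.bR
        · constructor
          · intro hc
            simp only [List.length_append, List.length_singleton] at hc
            omega
          · intro _
            left
            have := length_le_card hva'
            simp only [List.length_append, List.length_singleton] at this ⊢
            exact ⟨by omega, this, hpar.1⟩
      · -- Right moves in G'
        have hxV' : x ∈ G'.V := (Finset.mem_union.mp hxU).resolve_left hxV
        by_cases hxb : x ∈ b
        · -- already imagined: skip
          have hstep : usim G G' (l ++ [x]) = (a, b) := by
            rw [usim_append, hul, hm, ustep, if_neg hxV]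
            simp only [if_pos hxb]
          rw [hstep]
          have hxpb : x ∈ picked .L .R b := by
            have hxt : x ∈ b.toFinset := List.mem_toFinset.mpr hxb
            rw [← picked_union .L b] at hxt
            rcases Finset.mem_union.mp hxt with h2 | h2
            · exfalso
              rw [inv.bL] at h2
              have := picked_subset .L .L l (Finset.mem_of_mem_inter_left h2)
              exact hxl (List.mem_toFinset.mp this)
            · exact h2
          refine ⟨inv.va, inv.fa, inv.vb, inv.fb, ?_, ?_, ?_, ?_, ?_⟩
          · rw [picked_append_other hmL, inv.aL]
          · rw [picked_inter_of_not_mem hm hxV, inv.aR]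
          · rw [picked_append_other hmL, inv.bL]
          · rw [picked_inter_of_mem hm hxV']
            exact Finset.insert_subset hxpb inv.bR
          · constructor
            · intro hc
              simp only [List.length_append, List.length_singleton] at hc
              omega
            · intro _
              exact Or.inr (Or.inl ⟨hpar.2, hpar.1⟩)
        · -- record Right's move in b
          have hmovb : mover .L b.length = .R := mover_L_odd hpar.1
          have hstep : usim G G' (l ++ [x]) = (a, b ++ [x]) := by
            rw [usim_append, hul, hm, ustep, if_neg hxV]
            simp only [if_neg hxb]
          rw [hstep]
          refine ⟨inv.va, inv.fa, validHist_append inv.vb hxV' hxb hbnotend,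
            follows_append inv.fb (fun hc => absurd hc (by rw [hmovb]; decide)), ?_, ?_, ?_, ?_, ?_⟩
          · rw [picked_append_other hmL, inv.aL]
          · rw [picked_inter_of_not_mem hm hxV, inv.aR]
          · rw [picked_append_other hmL, picked_append_other (by rw [hmovb]; decide), inv.bL]
          · rw [picked_inter_of_mem hm hxV', picked_append, if_pos hmovb]
            exact Finset.insert_subset_insert _ inv.bR
          · constructor
            · intro hc
              simp only [List.length_append, List.length_singleton] at hc
              omega
            · intro _
              right; right
              refine ⟨hpar.2, ?_⟩
              simp only [List.length_append, List.length_singleton]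
              omega
/-! ### The combined strategy is legal and winning -/

lemma uinv_a_notend {G G' : Game} {τ σ' : Strategy} {h a b : List ℕ}
    (inv : UInv G G' τ σ' h a b) (hτS : Safe G .R .L τ)
    (hne : ¬ ended (gunion G G') .L h) : ¬ ended G .R a := by
  rintro (⟨e, he, hes⟩ | hfill)
  · rw [inv.aL] at hes
    exact hne (Or.inl ⟨e, Finset.mem_union_left _ he, hes.trans Finset.inter_subset_left⟩)
  · exact hτS a inv.va inv.fa hfill

lemma uinv_b_notend {G G' : Game} {τ σ' : Strategy} {h a b : List ℕ}
    (inv : UInv G G' τ σ' h a b) (hσS : Safe G' .L .L σ')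
    (hne : ¬ ended (gunion G G') .L h) : ¬ ended G' .L b := by
  rintro (⟨e, he, hes⟩ | hfill)
  · rw [inv.bL] at hes
    exact hne (Or.inl ⟨e, Finset.mem_union_right _ he, hes.trans Finset.inter_subset_left⟩)
  · exact hσS b inv.vb inv.fb hfill

lemma uinv_b_lt {G G' : Game} {τ σ' : Strategy} {h a b : List ℕ}
    (inv : UInv G G' τ σ' h a b)
    (hσW : ∀ h, ValidHist G' .L h → Follows .L .L σ' h → Complete G' .L h →
      fills (G'.edges .L) (picked .L .L h))
    (hne : ¬ ended (gunion G G') .L h) : b.length < G'.V.card := by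
  have hbne : b.length ≠ G'.V.card := by
    intro hfull
    obtain ⟨e, he, hes⟩ := hσW b inv.vb inv.fb (Or.inr hfull)
    rw [inv.bL] at hes
    exact hne (Or.inl ⟨e, Finset.mem_union_right _ he, hes.trans Finset.inter_subset_left⟩)
  exact lt_of_le_of_ne (length_le_card inv.vb) hbne

lemma uinv_mem_b {G G' : Game} {τ σ' : Strategy} {h a b : List ℕ}
    (inv : UInv G G' τ σ' h a b) :
    ∀ y, y ∈ h → y ∈ G'.V → y ∈ b := by
  intro y hy hyV'
  have hyt : y ∈ h.toFinset := List.mem_toFinset.mpr hy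
  rw [← picked_union .L h] at hyt
  apply List.mem_toFinset.mp
  rw [← picked_union .L b]
  rcases Finset.mem_union.mp hyt with h2 | h2
  · apply Finset.mem_union_left
    rw [inv.bL]
    exact Finset.mem_inter.mpr ⟨h2, hyV'⟩
  · apply Finset.mem_union_right
    exact inv.bR (Finset.mem_inter.mpr ⟨h2, hyV'⟩)

lemma ustrat_legal {G G' : Game} {σ' τ : Strategy}
    (hdisj : Disjoint G.V G'.V)
    (hτL : Legal G .R .L τ) (hτS : Safe G .R .L τ)
    (hσL : Legal G' .L .L σ')
    (hσW : ∀ h, ValidHist G' .L h → Follows .L .L σ' h → Complete G' .L h →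
      fills (G'.edges .L) (picked .L .L h))
    (hσS : Safe G' .L .L σ') :
    Legal (gunion G G') .L .L (ustrat G G' σ' τ) := by
  intro h hv hf hne _ _
  have inv := uinv hdisj hτL hτS hσL hσW hσS h hv hf
  set a := (usim G G' h).1 with ha
  set b := (usim G G' h).2 with hb
  have hanotend := uinv_a_notend inv hτS hne
  have hbnotend := uinv_b_notend inv hσS hne
  have hblt := uinv_b_lt inv hσW hne
  have hmemha : ∀ y, y ∈ h → y ∈ G.V → y ∈ a := by
    intro y hy hyV
    rw [ha, usim_fst]
    exact List.mem_filter.mpr ⟨hy, by simpa using hyV⟩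
  have hmemhb := uinv_mem_b inv
  rw [ustrat]
  simp only [← ha, ← hb]
  by_cases c1 : a.length % 2 = 1 ∧ a.length < G.V.card
  · rw [if_pos c1]
    have hτleg := hτL a inv.va inv.fa hanotend c1.2 (mover_R_odd c1.1)
    refine ⟨Finset.mem_union_left _ hτleg.1, fun hc => hτleg.2 (hmemha _ hc hτleg.1)⟩
  · rw [if_neg c1]
    by_cases c2 : b.length % 2 = 0
    · rw [if_pos c2]
      have hσleg := hσL b inv.vb inv.fb hbnotend hblt (mover_L_even c2)
      refine ⟨Finset.mem_union_right _ hσleg.1, fun hc => hσleg.2 (hmemhb _ hc hσleg.1)⟩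
    · rw [if_neg c2]
      have hbodd : b.length % 2 = 1 := by omega
      have hfree := exists_free inv.vb hblt
      obtain ⟨hfV, hfb⟩ := ufake_spec (G' := G') hfree
      set f := ufake G' b with hfdef
      have hmovfL : mover .L b.length ≠ .L := by rw [mover_L_odd hbodd]; decide
      have hvbf : ValidHist G' .L (b ++ [f]) := validHist_append inv.vb hfV hfb hbnotend
      have hfbf : Follows .L .L σ' (b ++ [f]) :=
        follows_append inv.fb (fun hc => absurd hc hmovfL)
      have hpLf : picked .L .L (b ++ [f]) = picked .L .L b := picked_append_other hmovfL
      have hbfnotend : ¬ ended G' .L (b ++ [f]) := by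
        rintro (⟨e, he, hes⟩ | hfill)
        · rw [hpLf, inv.bL] at hes
          exact hne (Or.inl ⟨e, Finset.mem_union_right _ he,
            hes.trans Finset.inter_subset_left⟩)
        · exact hσS _ hvbf hfbf hfill
      have hbfne : (b ++ [f]).length ≠ G'.V.card := by
        intro hfull
        obtain ⟨e, he, hes⟩ := hσW _ hvbf hfbf (Or.inr hfull)
        rw [hpLf, inv.bL] at hes
        exact hne (Or.inl ⟨e, Finset.mem_union_right _ he,
          hes.trans Finset.inter_subset_left⟩)
      have hbflt : (b ++ [f]).length < G'.V.card :=
        lt_of_le_of_ne (length_le_card hvbf) hbfne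
      have hmovbf : mover .L (b ++ [f]).length = .L := by
        apply mover_L_even
        simp only [List.length_append, List.length_singleton]
        omega
      have hσleg := hσL _ hvbf hfbf hbfnotend hbflt hmovbf
      refine ⟨Finset.mem_union_right _ hσleg.1, fun hc => ?_⟩
      exact hσleg.2 (List.mem_append.mpr (Or.inl (hmemhb _ hc hσleg.1)))

lemma ustrat_wins {G G' : Game} {σ' τ : Strategy}
    (hG : WellFormed G) (hG' : WellFormed G')
    (hdisj : Disjoint G.V G'.V)
    (hτL : Legal G .R .L τ) (hτS : Safe G .R .L τ)
    (hσL : Legal G' .L .L σ')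
    (hσW : ∀ h, ValidHist G' .L h → Follows .L .L σ' h → Complete G' .L h →
      fills (G'.edges .L) (picked .L .L h))
    (hσS : Safe G' .L .L σ') :
    ∀ h, ValidHist (gunion G G') .L h → Follows .L .L (ustrat G G' σ' τ) h →
      Complete (gunion G G') .L h →
      fills ((gunion G G').edges .L) (picked .L .L h) := by
  intro h hv hf hc
  have inv := uinv hdisj hτL hτS hσL hσW hσS h hv hf
  set a := (usim G G' h).1 with ha
  set b := (usim G G' h).2 with hb
  rcases hc with hend | hfull
  · rcases hend with hblue | hred
    · exact hblue
    · exfalso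
      obtain ⟨e, he, hes⟩ := hred
      rcases Finset.mem_union.mp he with heG | heG'
      · have heV : e ⊆ G.V := (hG.2 e heG).1
        have hsub : e ⊆ picked .R .R a := by
          rw [inv.aR]; exact Finset.subset_inter hes heV
        exact hτS a inv.va inv.fa ⟨e, heG, hsub⟩
      · have heV : e ⊆ G'.V := (hG'.2 e heG').1
        have hsub : e ⊆ picked .L .R b := (Finset.subset_inter hes heV).trans inv.bR
        exact hσS b inv.vb inv.fb ⟨e, heG', hsub⟩
  · -- all vertices picked: then the imagined game in G' is complete and Left has won it
    have hhsub : h.toFinset ⊆ G.V ∪ G'.V := fun y hy => hv.2.1 y (List.mem_toFinset.mp hy)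
    have hhcard : h.toFinset.card = h.length := List.toFinset_card_of_nodup hv.1
    have hheq : h.toFinset = G.V ∪ G'.V := by
      apply Finset.eq_of_subset_of_card_le hhsub
      have : (gunion G G').V.card = (G.V ∪ G'.V).card := rfl
      omega
    have hbsub : b.toFinset ⊆ G'.V := fun y hy => inv.vb.2.1 y (List.mem_toFinset.mp hy)
    have hV'b : G'.V ⊆ b.toFinset := by
      intro y hyV'
      have hyh : y ∈ h.toFinset := by
        rw [hheq]; exact Finset.mem_union_right _ hyV'
      exact List.mem_toFinset.mpr
        (uinv_mem_b inv y (List.mem_toFinset.mp hyh) hyV')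
    have hbeq : b.toFinset = G'.V := Finset.Subset.antisymm hbsub hV'b
    have hbcard : b.length = G'.V.card := by
      rw [← hbeq, List.toFinset_card_of_nodup inv.vb.1]
    obtain ⟨e, he, hes⟩ := hσW b inv.vb inv.fb (Or.inr hbcard)
    rw [inv.bL] at hes
    exact ⟨e, Finset.mem_union_right _ he, hes.trans Finset.inter_subset_left⟩

/-- If `o(G) ∈ {L, L⁻}` and `o(G') = N`, then Left has a winning strategy on `G ∪ G'`
as first player, i.e. `o(G ∪ G') ∈ {L, L⁻, N}`. -/
theorem union_LLminus_N (G G' : Game) (hG : WellFormed G) (hG' : WellFormed G')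
    (hdisj : Disjoint G.V G'.V)
    (hGo : hasOutcome G oL ∨ hasOutcome G oLminus) (hG'o : hasOutcome G' oN) :
    WinsAs (gunion G G') .L .L ∧
      ∃ o : Outcome, hasOutcome (gunion G G') o ∧ (o = oL ∨ o = oLminus ∨ o = oN) := by
  -- Left's winning strategy on G' moving first
  obtain ⟨σ', hσL, hσW⟩ : WinsAs G' .L .L := hG'o.1
  have hσS : Safe G' .L .L σ' := safe_of_winning hG' hσW
  -- Left's non-losing strategy on G moving second
  obtain ⟨τ, hτL, hτS⟩ : ∃ τ, Legal G .R .L τ ∧ Safe G .R .L τ := by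
    rcases hGo with hL | hLm
    · obtain ⟨τ, hτL, hτW⟩ : WinsAs G .R .L := hL.2
      exact ⟨τ, hτL, safe_of_winning hG hτW⟩
    · obtain ⟨τ, hτL, hτN⟩ : NonLosingAs G .R .L := hLm.2.1
      exact ⟨τ, hτL, safe_of_nonlosing hτN⟩
  have hwin : WinsAs (gunion G G') .L .L :=
    ⟨ustrat G G' σ' τ, ustrat_legal hdisj hτL hτS hσL hσW hσS,
      ustrat_wins hG hG' hdisj hτL hτS hσL hσW hσS⟩
  refine ⟨hwin, ?_⟩
  rcases determinacy (gunion G G') .R with hL | hR | hD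
  · exact ⟨oL, ⟨hwin, hL⟩, Or.inl rfl⟩
  · exact ⟨oN, ⟨hwin, hR⟩, Or.inr (Or.inr rfl)⟩
  · exact ⟨oLminus, ⟨hwin, hD⟩, Or.inr (Or.inl rfl)⟩
end APG
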